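/- arXiv:1802.00915 — 2 statements merged into one kernel-verified Lean document; each statement's English description precedes it below -/
import Mathlib

section
/- Define erfc(t) = (2/√π) ∫_t^∞ e^{−s²} ds. Then for every t ≥ 0, (1/√π) ∫_0^t (t−s)^{−1/2} e^s · erfc(√s) ds = 1 − e^t · erfc(√t). -/
open MeasureTheory intervalIntegral Set

lemma rpow_nhalf_nonneg (x : ℝ) : 0 ≤ x ^ (-(1/2) : ℝ) := by
  rcases le_or_gt 0 x with h | h
  · exact Real.rpow_nonneg h _
  · rw [Real.rpow_def_of_neg h]
    have hc : Real.cos (-(1/2) * Real.pi) = 0 := by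
      rw [neg_mul, Real.cos_neg, show (1/2 : ℝ) * Real.pi = Real.pi / 2 by ring,
        Real.cos_pi_div_two]
    rw [hc, mul_zero]

lemma meas_rpow_nhalf : Measurable fun x : ℝ => x ^ (-(1/2) : ℝ) := by measurability


noncomputable def Phi (x : ℝ) : ℝ := ∫ u in (0:ℝ)..x, Real.exp (-u^2)

lemma cont_gauss : Continuous fun u : ℝ => Real.exp (-u^2) := by continuity

lemma hasDerivAt_Phi (x : ℝ) : HasDerivAt Phi (Real.exp (-x^2)) x :=
  intervalIntegral.integral_hasDerivAt_right (cont_gauss.intervalIntegrable _ _)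
    (cont_gauss.stronglyMeasurableAtFilter _ _) cont_gauss.continuousAt

lemma continuous_Phi : Continuous Phi := by
  have : Differentiable ℝ Phi := fun x => (hasDerivAt_Phi x).differentiableAt
  exact this.continuous

/-- The half-power integral: ∫_a^b (b-s)^{-1/2} e^s ds = 2 e^b (Phi (√(b-a)) ) -/
lemma key_half (a b : ℝ) (hab : a < b) :
    ∫ s in a..b, (b - s) ^ (-(1/2) : ℝ) * Real.exp s
      = 2 * Real.exp b * Phi (Real.sqrt (b - a)) := by
  have hG : ∀ s ∈ Set.Ioo a b,
      HasDerivAt (fun s => -2 * Real.exp b * Phi (Real.sqrt (b - s)))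
        ((b - s) ^ (-(1/2) : ℝ) * Real.exp s) s := by
    intro s hs
    have hbs : 0 < b - s := by linarith [hs.2]
    have h1 : HasDerivAt (fun s : ℝ => b - s) (-1) s := by
      simpa using (hasDerivAt_id s).const_sub b
    have h2 : HasDerivAt (fun s : ℝ => Real.sqrt (b - s)) (1 / (2 * Real.sqrt (b - s)) * (-1)) s :=
      (Real.hasDerivAt_sqrt hbs.ne').comp s h1
    have h3 := ((hasDerivAt_Phi (Real.sqrt (b - s))).comp s h2).const_mul (-2 * Real.exp b)
    convert h3 using 1
    iterate 3 rfl
    have hsq : Real.sqrt (b - s) ^ 2 = b - s := Real.sq_sqrt hbs.le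
    rw [hsq]
    have hrt : Real.sqrt (b - s) > 0 := Real.sqrt_pos.2 hbs
    rw [Real.rpow_neg hbs.le, ← Real.sqrt_eq_rpow]
    rw [Real.exp_neg, Real.exp_sub]
    field_simp
  have hnn : ∀ s ∈ Set.Ioo a b, 0 ≤ (b - s) ^ (-(1/2) : ℝ) * Real.exp s := by
    intro s hs
    have : (0:ℝ) ≤ b - s := by linarith [hs.2]
    positivity
  have hcont : ContinuousOn (fun s => -2 * Real.exp b * Phi (Real.sqrt (b - s))) (Set.Icc a b) :=
    (continuous_const.mul (continuous_Phi.comp ((continuous_const.sub continuous_id).sqrt))).continuousOn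
  have hint : IntervalIntegrable (fun s => (b - s) ^ (-(1/2) : ℝ) * Real.exp s) volume a b := by
    rw [intervalIntegrable_iff_integrableOn_Ioc_of_le hab.le]
    exact integrableOn_deriv_of_nonneg hcont hG hnn
  rw [integral_eq_sub_of_hasDerivAt_of_le hab.le hcont hG hint]
  simp [Phi, Real.sqrt_eq_zero']

/-- The complementary error function `erfc(t) = (2/√π) ∫_t^∞ e^{−s²} ds`. -/
noncomputable def erfc (t : ℝ) : ℝ :=
  (2 / Real.sqrt Real.pi) * ∫ s in Set.Ioi t, Real.exp (-s ^ 2)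


lemma gauss_integrableOn (s : Set ℝ) : IntegrableOn (fun u : ℝ => Real.exp (-u ^ 2)) s := by
  have := integrable_exp_neg_mul_sq (b := (1:ℝ)) one_pos
  simpa using this.integrableOn

lemma gauss_Ioi_zero : ∫ u in Set.Ioi (0:ℝ), Real.exp (-u ^ 2) = Real.sqrt Real.pi / 2 := by
  have := integral_gaussian_Ioi 1
  simpa using this

lemma erfc_eq (x : ℝ) (hx : 0 ≤ x) :
    erfc x = 1 - (2 / Real.sqrt Real.pi) * Phi x := by
  have hsplit : ∫ u in Set.Ioi (0:ℝ), Real.exp (-u ^ 2)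
      = (∫ u in Set.Ioc 0 x, Real.exp (-u ^ 2)) + ∫ u in Set.Ioi x, Real.exp (-u ^ 2) := by
    rw [← setIntegral_union (Set.Ioc_disjoint_Ioi le_rfl) measurableSet_Ioi
      (gauss_integrableOn _) (gauss_integrableOn _), Set.Ioc_union_Ioi_eq_Ioi hx]
  have hPhi : Phi x = ∫ u in Set.Ioc 0 x, Real.exp (-u ^ 2) := by
    rw [Phi, intervalIntegral.integral_of_le hx]
  have hpi : Real.sqrt Real.pi ≠ 0 := by
    positivity
  rw [erfc, hPhi]
  rw [gauss_Ioi_zero] at hsplit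
  have : ∫ u in Set.Ioc 0 x, Real.exp (-u ^ 2)
      = Real.sqrt Real.pi / 2 - ∫ u in Set.Ioi x, Real.exp (-u ^ 2) := by linarith
  rw [this]
  field_simp
  ring

lemma erfc_nonneg (x : ℝ) : 0 ≤ erfc x := by
  rw [erfc]
  have h1 : (0:ℝ) ≤ 2 / Real.sqrt Real.pi := by positivity
  refine mul_nonneg h1 (setIntegral_nonneg measurableSet_Ioi fun u _ => (Real.exp_pos _).le)

lemma erfc_le_one (x : ℝ) (hx : 0 ≤ x) : erfc x ≤ 1 := by
  rw [erfc_eq x hx]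
  have h1 : 0 ≤ Phi x := by
    rw [Phi, intervalIntegral.integral_of_le hx]
    exact setIntegral_nonneg measurableSet_Ioc fun u _ => (Real.exp_pos _).le
  have h2 : (0:ℝ) ≤ 2 / Real.sqrt Real.pi := by positivity
  nlinarith

lemma erfc_zero' : erfc 0 = 1 := by
  rw [erfc, gauss_Ioi_zero]
  have hpi : Real.sqrt Real.pi ≠ 0 := by positivity
  field_simp

lemma beta_deriv (r t : ℝ) (hrt : r < t) :
    ∀ s ∈ Set.Ioo r t,
      HasDerivAt (fun s => 2 * Real.arcsin (Real.sqrt ((s - r) / (t - r))))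
        ((t - s) ^ (-(1/2) : ℝ) * (s - r) ^ (-(1/2) : ℝ)) s := by
  intro s hs
  have hc : 0 < t - r := by linarith
  have hsr : 0 < s - r := by linarith [hs.1]
  have hts : 0 < t - s := by linarith [hs.2]
  set x : ℝ := (s - r) / (t - r) with hx
  have hx0 : 0 < x := div_pos hsr hc
  have hx1 : x < 1 := by rw [div_lt_one hc]; linarith
  have h1 : HasDerivAt (fun s : ℝ => (s - r) / (t - r)) (1 / (t - r)) s := by
    simpa [div_eq_mul_inv, one_mul] using ((hasDerivAt_id s).sub_const r).div_const (t - r)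
  have h2 : HasDerivAt (fun s : ℝ => Real.sqrt ((s - r) / (t - r)))
      (1 / (2 * Real.sqrt x) * (1 / (t - r))) s :=
    (Real.hasDerivAt_sqrt hx0.ne').comp s h1
  have hsx1 : Real.sqrt x ≠ 1 := by
    rw [ne_eq, Real.sqrt_eq_one]; exact hx1.ne
  have hsxm1 : Real.sqrt x ≠ -1 := by
    have := Real.sqrt_nonneg x; intro h; rw [h] at this; linarith
  have h3 := ((Real.hasDerivAt_arcsin hsxm1 hsx1).comp s h2).const_mul (2 : ℝ)
  convert h3 using 1
  iterate 3 rfl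
  rw [Real.sq_sqrt hx0.le]
  have h1x : 1 - x = (t - s) / (t - r) := by rw [hx, one_sub_div hc.ne']; ring_nf
  rw [h1x, hx, Real.rpow_neg hts.le, Real.rpow_neg hsr.le,
    ← Real.sqrt_eq_rpow, ← Real.sqrt_eq_rpow]
  rw [Real.sqrt_div hts.le, Real.sqrt_div hsr.le]
  have e1 : Real.sqrt (t - s) > 0 := Real.sqrt_pos.2 hts
  have e2 : Real.sqrt (s - r) > 0 := Real.sqrt_pos.2 hsr
  have e3 : Real.sqrt (t - r) > 0 := Real.sqrt_pos.2 hc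
  have e4 : Real.sqrt (t - r) ^ 2 = t - r := Real.sq_sqrt hc.le
  field_simp
  nlinarith [e4]

lemma beta_nonneg (r t : ℝ) : ∀ s ∈ Set.Ioo r t,
    (0:ℝ) ≤ (t - s) ^ (-(1/2) : ℝ) * (s - r) ^ (-(1/2) : ℝ) := by
  intro s hs
  have h1 : (0:ℝ) ≤ t - s := by linarith [hs.2]
  have h2 : (0:ℝ) ≤ s - r := by linarith [hs.1]
  exact mul_nonneg (Real.rpow_nonneg h1 _) (Real.rpow_nonneg h2 _)

lemma beta_cont (r t : ℝ) :
    ContinuousOn (fun s => 2 * Real.arcsin (Real.sqrt ((s - r) / (t - r)))) (Set.Icc r t) := by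
  exact (continuous_const.mul (Real.continuous_arcsin.comp
    (((continuous_id.sub continuous_const).div_const _).sqrt))).continuousOn

lemma beta_integrableOn (r t : ℝ) (hrt : r < t) :
    IntegrableOn (fun s => (t - s) ^ (-(1/2) : ℝ) * (s - r) ^ (-(1/2) : ℝ)) (Set.Ioc r t) :=
  integrableOn_deriv_of_nonneg (beta_cont r t) (beta_deriv r t hrt) (beta_nonneg r t)

lemma key_beta (r t : ℝ) (hrt : r < t) :
    ∫ s in r..t, (t - s) ^ (-(1/2) : ℝ) * (s - r) ^ (-(1/2) : ℝ) = Real.pi := by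
  rw [integral_eq_sub_of_hasDerivAt_of_le hrt.le (beta_cont r t) (beta_deriv r t hrt)
    ((intervalIntegrable_iff_integrableOn_Ioc_of_le hrt.le).2 (beta_integrableOn r t hrt))]
  have hc : t - r ≠ 0 := by intro h; rw [sub_eq_zero] at h; exact hrt.ne' h
  simp [div_self hc, Real.arcsin_one]
  ring

lemma half_integrableOn (a b : ℝ) (hab : a < b) :
    IntegrableOn (fun s => (b - s) ^ (-(1/2) : ℝ) * Real.exp s) (Set.Ioc a b) := by
  have hG : ∀ s ∈ Set.Ioo a b,
      HasDerivAt (fun s => -2 * Real.exp b * Phi (Real.sqrt (b - s)))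
        ((b - s) ^ (-(1/2) : ℝ) * Real.exp s) s := by
    intro s hs
    have hbs : 0 < b - s := by linarith [hs.2]
    have h1 : HasDerivAt (fun s : ℝ => b - s) (-1) s := by
      simpa using (hasDerivAt_id s).const_sub b
    have h2 : HasDerivAt (fun s : ℝ => Real.sqrt (b - s)) (1 / (2 * Real.sqrt (b - s)) * (-1)) s :=
      (Real.hasDerivAt_sqrt hbs.ne').comp s h1
    have h3 := ((hasDerivAt_Phi (Real.sqrt (b - s))).comp s h2).const_mul (-2 * Real.exp b)
    convert h3 using 1
    iterate 3 rfl
    have hsq : Real.sqrt (b - s) ^ 2 = b - s := Real.sq_sqrt hbs.le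
    rw [hsq]
    have hrt : Real.sqrt (b - s) > 0 := Real.sqrt_pos.2 hbs
    rw [Real.rpow_neg hbs.le, ← Real.sqrt_eq_rpow, Real.exp_neg, Real.exp_sub]
    field_simp
  have hnn : ∀ s ∈ Set.Ioo a b, 0 ≤ (b - s) ^ (-(1/2) : ℝ) * Real.exp s := fun s _ =>
    mul_nonneg (rpow_nhalf_nonneg _) (Real.exp_pos _).le
  have hcont : ContinuousOn (fun s => -2 * Real.exp b * Phi (Real.sqrt (b - s))) (Set.Icc a b) :=
    (continuous_const.mul (continuous_Phi.comp
      ((continuous_const.sub continuous_id).sqrt))).continuousOn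
  exact integrableOn_deriv_of_nonneg hcont hG hnn

lemma swap_lemma (t : ℝ) (ht : 0 < t) :
    (∫ s in (0:ℝ)..t, (t - s) ^ (-(1/2) : ℝ)
        * (∫ r in (0:ℝ)..s, (s - r) ^ (-(1/2) : ℝ) * Real.exp r))
      = Real.pi * (Real.exp t - 1) := by
  set u₀ : ℝ × ℝ → ℝ := fun p => (p.1 - p.2) ^ (-(1/2) : ℝ) * Real.exp p.2 with hu₀
  set S₀ : Set (ℝ × ℝ) := {p | 0 < p.2} ∩ {p | p.2 ≤ p.1} with hS₀def
  set K₀ : ℝ × ℝ → ℝ := S₀.indicator u₀ with hK₀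
  set u : ℝ × ℝ → ℝ :=
    fun p => (t - p.1) ^ (-(1/2) : ℝ) * ((p.1 - p.2) ^ (-(1/2) : ℝ) * Real.exp p.2) with hu
  set T : Set (ℝ × ℝ) := S₀ ∩ ({p | 0 < p.1} ∩ {p | p.1 < t}) with hTdef
  set K : ℝ × ℝ → ℝ := T.indicator u with hK
  have hS₀m : MeasurableSet S₀ :=
    (measurableSet_lt measurable_const measurable_snd).inter
      (measurableSet_le measurable_snd measurable_fst)
  have hTm : MeasurableSet T :=
    hS₀m.inter ((measurableSet_lt measurable_const measurable_fst).inter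
      (measurableSet_lt measurable_fst measurable_const))
  have hu₀m : Measurable u₀ :=
    (meas_rpow_nhalf.comp (measurable_fst.sub measurable_snd)).mul
      (Real.measurable_exp.comp measurable_snd)
  have hum : Measurable u :=
    (meas_rpow_nhalf.comp (measurable_const.sub measurable_fst)).mul
      ((meas_rpow_nhalf.comp (measurable_fst.sub measurable_snd)).mul
        (Real.measurable_exp.comp measurable_snd))
  have hK₀m : Measurable K₀ := hu₀m.indicator hS₀m
  have hKm : Measurable K := hum.indicator hTm
  have hu₀nn : ∀ p, 0 ≤ u₀ p := fun p =>
    mul_nonneg (rpow_nhalf_nonneg _) (Real.exp_pos _).le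
  have hK₀nn : ∀ p, 0 ≤ K₀ p := fun p =>
    Set.indicator_nonneg (fun q _ => hu₀nn q) p
  set M : ℝ → ℝ := fun s => ∫ r, K₀ (s, r) with hM
  have hMmeas : Measurable M :=
    (hK₀m.stronglyMeasurable.integral_prod_right').measurable
  have hMnn : ∀ s, 0 ≤ M s := fun s => integral_nonneg fun r => hK₀nn _
  have hS₀mem : ∀ s r : ℝ, (s, r) ∈ S₀ ↔ (0 < r ∧ r ≤ s) := by
    intro s r; simp [hS₀def, Set.mem_setOf_eq]
  have hTmem : ∀ s r : ℝ, (s, r) ∈ T ↔ ((0 < r ∧ r ≤ s) ∧ (0 < s ∧ s < t)) := by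
    intro s r; simp [hTdef, hS₀def, Set.mem_setOf_eq, and_assoc]
  have hfun : ∀ s : ℝ, (fun r => K₀ (s, r))
      = Set.indicator (Set.Ioc 0 s) (fun r => (s - r) ^ (-(1/2) : ℝ) * Real.exp r) := by
    intro s
    funext r
    by_cases hr : r ∈ Set.Ioc 0 s
    · rw [Set.indicator_of_mem hr, hK₀, Set.indicator_of_mem ((hS₀mem s r).2 ⟨hr.1, hr.2⟩)]
    · rw [Set.indicator_of_notMem hr, hK₀, Set.indicator_of_notMem]
      intro hmem
      exact hr ⟨((hS₀mem s r).1 hmem).1, ((hS₀mem s r).1 hmem).2⟩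
  have hInner : ∀ s : ℝ, 0 < s →
      (∫ r in (0:ℝ)..s, (s - r) ^ (-(1/2) : ℝ) * Real.exp r) = M s := by
    intro s hs
    calc (∫ r in (0:ℝ)..s, (s - r) ^ (-(1/2) : ℝ) * Real.exp r)
        = ∫ r in Set.Ioc 0 s, (s - r) ^ (-(1/2) : ℝ) * Real.exp r :=
          intervalIntegral.integral_of_le hs.le
      _ = ∫ r, Set.indicator (Set.Ioc 0 s) (fun r => (s - r) ^ (-(1/2) : ℝ) * Real.exp r) r :=
          (MeasureTheory.integral_indicator measurableSet_Ioc).symm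
      _ = ∫ r, K₀ (s, r) := by rw [← hfun s]
  have step1 : (∫ s in (0:ℝ)..t, (t - s) ^ (-(1/2) : ℝ)
        * (∫ r in (0:ℝ)..s, (s - r) ^ (-(1/2) : ℝ) * Real.exp r))
      = ∫ s in Set.Ioo 0 t, (t - s) ^ (-(1/2) : ℝ) * M s := by
    rw [intervalIntegral.integral_of_le ht.le, integral_Ioc_eq_integral_Ioo]
    refine setIntegral_congr_fun measurableSet_Ioo fun s hs => ?_
    rw [hInner s hs.1]
  have hfM_meas : Measurable fun s => (t - s) ^ (-(1/2) : ℝ) * M s :=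
    (meas_rpow_nhalf.comp (measurable_const.sub measurable_id)).mul hMmeas
  have hfM_nn : ∀ s, 0 ≤ (t - s) ^ (-(1/2) : ℝ) * M s := fun s =>
    mul_nonneg (rpow_nhalf_nonneg _) (hMnn s)
  have step2 : (∫ s in Set.Ioo 0 t, (t - s) ^ (-(1/2) : ℝ) * M s)
      = (∫⁻ s in Set.Ioo 0 t, ENNReal.ofReal ((t - s) ^ (-(1/2) : ℝ) * M s)).toReal := by
    rw [integral_eq_lintegral_of_nonneg_ae (Filter.Eventually.of_forall fun s => hfM_nn s)
      hfM_meas.aestronglyMeasurable.restrict]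
  have hsecEq : ∀ s ∈ Set.Ioo 0 t,
      ENNReal.ofReal ((t - s) ^ (-(1/2) : ℝ) * M s) = ∫⁻ r, ENNReal.ofReal (K (s, r)) := by
    intro s hs
    have hint : Integrable (fun r => K₀ (s, r)) := by
      rw [hfun s, integrable_indicator_iff measurableSet_Ioc]
      exact half_integrableOn 0 s hs.1
    have hMeq : ENNReal.ofReal (M s) = ∫⁻ r, ENNReal.ofReal (K₀ (s, r)) :=
      ofReal_integral_eq_lintegral_ofReal hint (Filter.Eventually.of_forall fun r => hK₀nn _)
    rw [ENNReal.ofReal_mul (rpow_nhalf_nonneg _), hMeq,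
      ← lintegral_const_mul' _ _ ENNReal.ofReal_ne_top]
    refine lintegral_congr fun r => ?_
    rw [← ENNReal.ofReal_mul (rpow_nhalf_nonneg _)]
    congr 1
    by_cases hr : (0 < r ∧ r ≤ s)
    · rw [hK₀, Set.indicator_of_mem ((hS₀mem s r).2 hr), hK,
        Set.indicator_of_mem ((hTmem s r).2 ⟨hr, hs.1, hs.2⟩)]
    · rw [hK₀, Set.indicator_of_notMem, hK, Set.indicator_of_notMem, mul_zero]
      · intro hmem; exact hr ((hTmem s r).1 hmem).1
      · intro hmem; exact hr ((hS₀mem s r).1 hmem)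
  have step3 : (∫⁻ s in Set.Ioo 0 t, ENNReal.ofReal ((t - s) ^ (-(1/2) : ℝ) * M s))
      = ∫⁻ s, ∫⁻ r, ENNReal.ofReal (K (s, r)) := by
    rw [setLIntegral_congr_fun measurableSet_Ioo hsecEq,
      ← lintegral_indicator measurableSet_Ioo]
    refine lintegral_congr fun s => ?_
    by_cases hs : s ∈ Set.Ioo 0 t
    · rw [Set.indicator_of_mem hs]
    · rw [Set.indicator_of_notMem hs]
      have hz : ∀ r : ℝ, K (s, r) = 0 := by
        intro r
        rw [hK, Set.indicator_of_notMem]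
        intro hmem
        exact hs ⟨((hTmem s r).1 hmem).2.1, ((hTmem s r).1 hmem).2.2⟩
      simp [hz]
  have step4 : (∫⁻ s, ∫⁻ r, ENNReal.ofReal (K (s, r)))
      = ∫⁻ r, ∫⁻ s, ENNReal.ofReal (K (s, r)) := by
    apply lintegral_lintegral_swap
    apply Measurable.aemeasurable
    have huncurry : Function.uncurry (fun s r => ENNReal.ofReal (K (s, r)))
        = fun p => ENNReal.ofReal (K p) := by
      funext p; simp [Function.uncurry]
    rw [huncurry]
    exact ENNReal.measurable_ofReal.comp hKm
  have hrsec : ∀ r : ℝ, (∫⁻ s, ENNReal.ofReal (K (s, r)))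
      = Set.indicator (Set.Ioo 0 t) (fun r => ENNReal.ofReal (Real.pi * Real.exp r)) r := by
    intro r
    by_cases hr : r ∈ Set.Ioo 0 t
    · rw [Set.indicator_of_mem hr]
      have hind : (fun s => ENNReal.ofReal (K (s, r)))
          = fun s => Set.indicator (Set.Ico r t) (fun s => ENNReal.ofReal (u (s, r))) s := by
        funext s
        by_cases hsr : s ∈ Set.Ico r t
        · rw [Set.indicator_of_mem hsr, hK,
            Set.indicator_of_mem ((hTmem s r).2
              ⟨⟨hr.1, hsr.1⟩, lt_of_lt_of_le hr.1 hsr.1, hsr.2⟩)]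
        · rw [Set.indicator_of_notMem hsr, hK, Set.indicator_of_notMem]
          · simp
          · intro hmem
            exact hsr ⟨((hTmem s r).1 hmem).1.2, ((hTmem s r).1 hmem).2.2⟩
      have heq : (fun s => u (s, r))
          = fun s => ((t - s) ^ (-(1/2) : ℝ) * (s - r) ^ (-(1/2) : ℝ)) * Real.exp r := by
        funext s; rw [hu]; ring
      have hintu : IntegrableOn (fun s => u (s, r)) (Set.Ioc r t) := by
        rw [heq]
        exact (beta_integrableOn r t hr.2).mul_const _
      rw [hind, lintegral_indicator measurableSet_Ico,
        Measure.restrict_congr_set Ico_ae_eq_Ioc,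
        ← ofReal_integral_eq_lintegral_ofReal hintu
          (Filter.Eventually.of_forall fun s =>
            mul_nonneg (rpow_nhalf_nonneg _)
              (mul_nonneg (rpow_nhalf_nonneg _) (Real.exp_pos _).le))]
      congr 1
      calc ∫ s in Set.Ioc r t, u (s, r)
          = ∫ s in Set.Ioc r t,
              ((t - s) ^ (-(1/2) : ℝ) * (s - r) ^ (-(1/2) : ℝ)) * Real.exp r := by rw [heq]
        _ = (∫ s in Set.Ioc r t, (t - s) ^ (-(1/2) : ℝ) * (s - r) ^ (-(1/2) : ℝ)) * Real.exp r :=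
            integral_mul_const _ _
        _ = Real.pi * Real.exp r := by
            rw [← intervalIntegral.integral_of_le hr.2.le, key_beta r t hr.2]
    · rw [Set.indicator_of_notMem hr]
      have hz : ∀ s : ℝ, K (s, r) = 0 := by
        intro s
        rw [hK, Set.indicator_of_notMem]
        intro hmem
        exact hr ⟨((hTmem s r).1 hmem).1.1,
          lt_of_le_of_lt ((hTmem s r).1 hmem).1.2 ((hTmem s r).1 hmem).2.2⟩
      simp [hz]
  have step5 : (∫⁻ r, ∫⁻ s, ENNReal.ofReal (K (s, r)))
      = ENNReal.ofReal (Real.pi * (Real.exp t - 1)) := by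
    rw [lintegral_congr hrsec, lintegral_indicator measurableSet_Ioo]
    have hint2 : IntegrableOn (fun r => Real.pi * Real.exp r) (Set.Ioo 0 t) :=
      ((continuous_const.mul Real.continuous_exp).integrableOn_Ioc).mono_set
        Set.Ioo_subset_Ioc_self
    rw [← ofReal_integral_eq_lintegral_ofReal hint2
      (Filter.Eventually.of_forall fun r => mul_nonneg Real.pi_pos.le (Real.exp_pos _).le)]
    congr 1
    rw [← integral_Ioc_eq_integral_Ioo, ← intervalIntegral.integral_of_le ht.le,
      intervalIntegral.integral_const_mul, integral_exp]
    simp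
  rw [step1, step2, step3, step4, step5, ENNReal.toReal_ofReal]
  have h1 : (1:ℝ) ≤ Real.exp t := Real.one_le_exp ht.le
  nlinarith [Real.pi_pos]

lemma Phi_nonneg (x : ℝ) (hx : 0 ≤ x) : 0 ≤ Phi x := by
  rw [Phi, intervalIntegral.integral_of_le hx]
  exact setIntegral_nonneg measurableSet_Ioc fun u _ => (Real.exp_pos _).le

lemma Phi_le (x : ℝ) (hx : 0 ≤ x) : Phi x ≤ Real.sqrt Real.pi / 2 := by
  rw [Phi, intervalIntegral.integral_of_le hx, ← gauss_Ioi_zero]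
  exact setIntegral_mono_set (gauss_integrableOn _)
    (Filter.Eventually.of_forall fun u => (Real.exp_pos _).le)
    Set.Ioc_subset_Ioi_self.eventuallyLE

/-- Closed-form evaluation of the order-`1/2` Riemann–Liouville fractional integral of
`s ↦ e^s erfc(√s)`:
`(1/√π) ∫_0^t (t−s)^{−1/2} e^s erfc(√s) ds = 1 − e^t erfc(√t)` for all `t ≥ 0`. -/
theorem integral_example53 :
    ∀ t : ℝ, 0 ≤ t →
      (1 / Real.sqrt Real.pi)
          * (∫ s in (0:ℝ)..t, (t - s) ^ (-(1/2) : ℝ) * (Real.exp s * erfc (Real.sqrt s)))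
        = 1 - Real.exp t * erfc (Real.sqrt t) := by
  intro t ht
  have hpi : (0:ℝ) < Real.sqrt Real.pi := Real.sqrt_pos.2 Real.pi_pos
  rcases eq_or_lt_of_le ht with h0 | ht
  · rw [← h0]
    simp [Real.sqrt_zero, erfc_zero']
  -- t > 0
  have hcongr : ∀ s ∈ Set.uIcc (0:ℝ) t,
      (t - s) ^ (-(1/2) : ℝ) * (Real.exp s * erfc (Real.sqrt s))
        = (t - s) ^ (-(1/2) : ℝ) * Real.exp s
          - (2 / Real.sqrt Real.pi)
            * ((t - s) ^ (-(1/2) : ℝ) * (Real.exp s * Phi (Real.sqrt s))) := by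
    intro s hs
    rw [erfc_eq _ (Real.sqrt_nonneg s)]
    ring
  have I1 : IntervalIntegrable (fun s => (t - s) ^ (-(1/2) : ℝ) * Real.exp s) volume 0 t :=
    (intervalIntegrable_iff_integrableOn_Ioc_of_le ht.le).2 (half_integrableOn 0 t ht)
  have I2' : IntegrableOn (fun s => (t - s) ^ (-(1/2) : ℝ) * (Real.exp s * Phi (Real.sqrt s)))
      (Set.Ioc 0 t) := by
    apply Integrable.mono'
      ((half_integrableOn 0 t ht).const_mul (Real.sqrt Real.pi / 2))
    · exact ((meas_rpow_nhalf.comp (measurable_const.sub measurable_id)).mul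
        (Real.measurable_exp.mul
          (continuous_Phi.comp Real.continuous_sqrt).measurable)).aestronglyMeasurable
    · rw [ae_restrict_iff' measurableSet_Ioc]
      refine Filter.Eventually.of_forall fun s hs => ?_
      have h1 : (0:ℝ) ≤ (t - s) ^ (-(1/2) : ℝ) := rpow_nhalf_nonneg _
      have h2 : (0:ℝ) ≤ Phi (Real.sqrt s) := Phi_nonneg _ (Real.sqrt_nonneg s)
      have h3 : Phi (Real.sqrt s) ≤ Real.sqrt Real.pi / 2 := Phi_le _ (Real.sqrt_nonneg s)
      rw [Real.norm_eq_abs, abs_of_nonneg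
        (mul_nonneg h1 (mul_nonneg (Real.exp_pos _).le h2))]
      calc (t - s) ^ (-(1/2) : ℝ) * (Real.exp s * Phi (Real.sqrt s))
          ≤ (t - s) ^ (-(1/2) : ℝ) * (Real.exp s * (Real.sqrt Real.pi / 2)) := by
            exact mul_le_mul_of_nonneg_left
              (mul_le_mul_of_nonneg_left h3 (Real.exp_pos _).le) h1
        _ = Real.sqrt Real.pi / 2 * ((t - s) ^ (-(1/2) : ℝ) * Real.exp s) := by ring
  have I2 : IntervalIntegrable
      (fun s => (t - s) ^ (-(1/2) : ℝ) * (Real.exp s * Phi (Real.sqrt s))) volume 0 t :=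
    (intervalIntegrable_iff_integrableOn_Ioc_of_le ht.le).2 I2'
  have hB : (∫ s in (0:ℝ)..t, (t - s) ^ (-(1/2) : ℝ) * (Real.exp s * Phi (Real.sqrt s)))
      = Real.pi * (Real.exp t - 1) / 2 := by
    have hcongr2 : ∀ s ∈ Set.uIcc (0:ℝ) t,
        (t - s) ^ (-(1/2) : ℝ)
            * (∫ r in (0:ℝ)..s, (s - r) ^ (-(1/2) : ℝ) * Real.exp r)
          = 2 * ((t - s) ^ (-(1/2) : ℝ) * (Real.exp s * Phi (Real.sqrt s))) := by
      intro s hs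
      rw [Set.uIcc_of_le ht.le] at hs
      rcases eq_or_lt_of_le hs.1 with h0 | h0
      · rw [← h0]
        simp [Phi]
      · rw [key_half 0 s h0, sub_zero]
        ring
    have := intervalIntegral.integral_congr (μ := volume) hcongr2
    rw [swap_lemma t ht] at this
    rw [intervalIntegral.integral_const_mul] at this
    linarith
  have hA : (∫ s in (0:ℝ)..t, (t - s) ^ (-(1/2) : ℝ) * Real.exp s)
      = 2 * Real.exp t * Phi (Real.sqrt t) := by
    rw [key_half 0 t ht, sub_zero]
  rw [intervalIntegral.integral_congr hcongr, intervalIntegral.integral_sub I1 (I2.const_mul _),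
    intervalIntegral.integral_const_mul, hA, hB, erfc_eq _ (Real.sqrt_nonneg t)]
  have hpi2 : Real.sqrt Real.pi * Real.sqrt Real.pi = Real.pi :=
    Real.mul_self_sqrt Real.pi_pos.le
  field_simp
  linear_combination (Real.exp t - 1) * hpi2
end

section
/- Define erfc(t) = (2/√π) ∫_t^∞ e^{−s²} ds and y(t) = 1 − e^t · erfc(√t). Then y satisfies, for every t ∈ [0, 1], y(t) = −(1/Γ(0.5)) ∫_0^t (t−s)^{−1/2} y(s) ds + 2√(t/π). -/
open MeasureTheory intervalIntegral Set

namespace Ex53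

noncomputable def E (x : ℝ) : ℝ := ∫ v in (0:ℝ)..x, Real.exp (-v^2)

lemma contExp : Continuous fun v : ℝ => Real.exp (-v^2) := by fun_prop

lemma E_hasDerivAt (x : ℝ) : HasDerivAt E (Real.exp (-x^2)) x :=
  integral_hasDerivAt_right (contExp.intervalIntegrable 0 x)
    (contExp.stronglyMeasurableAtFilter _ _) contExp.continuousAt

lemma E_cont : Continuous E :=
  continuous_iff_continuousAt.2 fun x => (E_hasDerivAt x).continuousAt

lemma E_zero : E 0 = 0 := integral_same

lemma E_abs_le (y : ℝ) : |E y| ≤ |y| := by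
  have := intervalIntegral.norm_integral_le_of_norm_le_const
    (C := 1) (f := fun v : ℝ => Real.exp (-v^2)) (a := 0) (b := y) ?_
  · simpa [E] using this
  · intro v _
    rw [Real.norm_eq_abs, abs_of_pos (Real.exp_pos _)]
    exact Real.exp_le_one_iff.2 (neg_nonpos.2 (sq_nonneg v))

noncomputable def gg (x u : ℝ) : ℝ :=
  x * (Real.exp (-(x*u)^2) * E (x * Real.sqrt (1 - u^2)))

noncomputable def gg' (x u : ℝ) : ℝ :=
  Real.exp (-(x*u)^2) * E (x * Real.sqrt (1 - u^2)) * (1 - 2*x^2*u^2)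
    + x * (Real.exp (-(x*u)^2) * Real.exp (-(x * Real.sqrt (1 - u^2))^2) * Real.sqrt (1 - u^2))

lemma gg_contu (x : ℝ) : Continuous fun u => gg x u := by
  unfold gg
  have h2 : Continuous fun u : ℝ => E (x * Real.sqrt (1 - u^2)) := by
    apply E_cont.comp; fun_prop
  fun_prop

lemma gg'_contu (x : ℝ) : Continuous fun u => gg' x u := by
  unfold gg'
  have h2 : Continuous fun u : ℝ => E (x * Real.sqrt (1 - u^2)) := by
    apply E_cont.comp; fun_prop
  fun_prop

lemma gg_hasDeriv (u x : ℝ) : HasDerivAt (fun x => gg x u) (gg' x u) x := by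
  set w := Real.sqrt (1 - u^2) with hw
  have hA : HasDerivAt (fun x : ℝ => Real.exp (-(x*u)^2))
      (Real.exp (-(x*u)^2) * -(2*x*u^2)) x := by
    have h1 : HasDerivAt (fun x : ℝ => -(x*u)^2) (-(2*x*u^2)) x := by
      have := (((hasDerivAt_id x).mul_const u).pow 2).neg
      refine this.congr_deriv ?_
      simp only [id_eq]; ring
    exact h1.exp
  have hB : HasDerivAt (fun x : ℝ => E (x * w)) (Real.exp (-(x*w)^2) * w) x := by
    have := (E_hasDerivAt (x*w)).comp x ((hasDerivAt_id x).mul_const w)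
    refine this.congr_deriv ?_; simp
  have := (hasDerivAt_id x).mul (hA.mul hB)
  refine this.congr_deriv ?_
  unfold gg'
  simp only [id_eq, Pi.mul_apply, ← hw]
  ring

lemma invsqrt_intInt : IntervalIntegrable (fun u : ℝ => (Real.sqrt (1-u^2))⁻¹) volume 0 1 := by
  have base : IntervalIntegrable (fun u : ℝ => (1-u) ^ (-(1/2):ℝ)) volume 0 1 := by
    have h := intervalIntegral.intervalIntegrable_rpow' (a := (0:ℝ)) (b := 1)
      (r := -(1/2)) (by norm_num)
    simpa using (h.comp_sub_left 1).symm
  apply base.mono_fun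
  · apply Measurable.aestronglyMeasurable
    fun_prop
  · apply Filter.eventually_of_mem (MeasureTheory.ae_restrict_mem measurableSet_uIoc)
    intro u hu
    rw [Set.uIoc_of_le (by norm_num : (0:ℝ) ≤ 1)] at hu
    show ‖(Real.sqrt (1-u^2))⁻¹‖ ≤ ‖(1-u) ^ (-(1/2):ℝ)‖
    rcases eq_or_lt_of_le hu.2 with h1 | h1
    · subst h1
      norm_num
    · have hu0 : 0 < u := hu.1
      have h2 : (0:ℝ) < 1 - u := by linarith
      have h3 : 1 - u ≤ 1 - u^2 := by nlinarith
      have h4 : (0:ℝ) < Real.sqrt (1 - u^2) := Real.sqrt_pos.2 (by nlinarith)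
      have h5 : Real.sqrt (1-u) ≤ Real.sqrt (1-u^2) := Real.sqrt_le_sqrt h3
      have h6 : (0:ℝ) < Real.sqrt (1-u) := Real.sqrt_pos.2 h2
      have hrpow : (1-u) ^ (-(1/2):ℝ) = (Real.sqrt (1-u))⁻¹ := by
        rw [Real.rpow_neg h2.le, Real.sqrt_eq_rpow]
      rw [Real.norm_eq_abs, Real.norm_eq_abs, hrpow,
        abs_of_pos (inv_pos.2 h4), abs_of_pos (inv_pos.2 h6)]
      exact inv_anti₀ h6 h5

lemma invsqrt_integral : ∫ u in (0:ℝ)..1, (Real.sqrt (1-u^2))⁻¹ = Real.pi/2 := by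
  have h := intervalIntegral.integral_eq_sub_of_hasDeriv_right_of_le
    (f := Real.arcsin) (f' := fun u : ℝ => (Real.sqrt (1-u^2))⁻¹) zero_le_one
    Real.continuous_arcsin.continuousOn
    (fun u hu => by
      have := Real.hasDerivAt_arcsin (by linarith [hu.1] : u ≠ -1) (ne_of_lt hu.2)
      simpa [one_div] using this.hasDerivWithinAt)
    invsqrt_intInt
  rw [h, Real.arcsin_one, Real.arcsin_zero, sub_zero]

lemma int_gg' (x : ℝ) :
    ∫ u in (0:ℝ)..1, gg' x u = Real.pi/2 * (x * Real.exp (-x^2)) := by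
  set c : ℝ := x * Real.exp (-x^2) with hc
  set P : ℝ → ℝ := fun u => u * (Real.exp (-(x*u)^2) * E (x * Real.sqrt (1-u^2))) with hP
  have hPcont : ContinuousOn P (Icc 0 1) := by
    have h2 : Continuous fun u : ℝ => E (x * Real.sqrt (1 - u^2)) := by
      apply E_cont.comp; fun_prop
    apply Continuous.continuousOn
    fun_prop
  have hderiv : ∀ u ∈ Ioo (0:ℝ) 1,
      HasDerivAt P (gg' x u - c * (Real.sqrt (1-u^2))⁻¹) u := by
    intro u hu
    have hu2 : (0:ℝ) < 1 - u^2 := by nlinarith [hu.1, hu.2]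
    set w := Real.sqrt (1-u^2) with hw
    have hw0 : 0 < w := Real.sqrt_pos.2 hu2
    have hwsq : w^2 = 1 - u^2 := Real.sq_sqrt hu2.le
    have hcw : HasDerivAt (fun u : ℝ => Real.sqrt (1-u^2)) (1/(2*w) * (-(2*u))) u := by
      have hinner : HasDerivAt (fun u : ℝ => 1 - u^2) (-(2*u)) u := by
        have := ((hasDerivAt_pow 2 u).const_sub 1)
        refine this.congr_deriv ?_
        push_cast
        ring
      exact (Real.hasDerivAt_sqrt (ne_of_gt hu2)).comp u hinner
    have hA : HasDerivAt (fun u : ℝ => Real.exp (-(x*u)^2))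
        (Real.exp (-(x*u)^2) * -(2*x^2*u)) u := by
      have h1 : HasDerivAt (fun u : ℝ => -(x*u)^2) (-(2*x^2*u)) u := by
        have := (((hasDerivAt_id u).const_mul x).pow 2).neg
        refine this.congr_deriv ?_
        simp only [id_eq]; ring
      exact h1.exp
    have hB : HasDerivAt (fun u : ℝ => E (x * Real.sqrt (1-u^2)))
        (Real.exp (-(x*w)^2) * (x * (1/(2*w) * (-(2*u))))) u := by
      have hxw : HasDerivAt (fun u : ℝ => x * Real.sqrt (1-u^2))
          (x * (1/(2*w) * (-(2*u)))) u := hcw.const_mul x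
      exact (E_hasDerivAt (x*w)).comp u hxw
    have hmain := (hasDerivAt_id u).mul (hA.mul hB)
    refine hmain.congr_deriv ?_
    simp only [id_eq, Pi.mul_apply]
    have hexp : Real.exp (-(x*u)^2) * Real.exp (-(x*w)^2) = Real.exp (-x^2) := by
      rw [← Real.exp_add]
      congr 1
      have h1 : (x*w)^2 = x^2*(1-u^2) := by rw [mul_pow, hwsq]
      rw [h1]; ring
    unfold gg'
    rw [hc, ← hexp, ← hw]
    field_simp
    linear_combination (-(x*Real.exp (-(x ^ 2 * w ^ 2)))) * hwsq
  have hDint : IntervalIntegrable (fun u => gg' x u - c * (Real.sqrt (1-u^2))⁻¹)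
      volume 0 1 :=
    ((gg'_contu x).intervalIntegrable 0 1).sub (invsqrt_intInt.const_mul c)
  have hparts := intervalIntegral.integral_eq_sub_of_hasDeriv_right_of_le zero_le_one
    hPcont (fun u hu => (hderiv u hu).hasDerivWithinAt) hDint
  have hP1 : P 1 = 0 := by
    simp [hP, E_zero]
  have hP0 : P 0 = 0 := by simp [hP]
  rw [hP1, hP0, sub_zero] at hparts
  have hsplit := intervalIntegral.integral_sub
    ((gg'_contu x).intervalIntegrable 0 1) (invsqrt_intInt.const_mul c)
  rw [hsplit] at hparts
  have hcint : ∫ u in (0:ℝ)..1, c * (Real.sqrt (1-u^2))⁻¹ = c * (Real.pi/2) := by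
    rw [intervalIntegral.integral_const_mul, invsqrt_integral]
  rw [hcint] at hparts
  have : ∫ u in (0:ℝ)..1, gg' x u = c * (Real.pi/2) := by linarith
  rw [this, hc]; ring

noncomputable def T (x : ℝ) : ℝ := ∫ u in (0:ℝ)..1, gg x u

lemma T_hasDeriv (x₀ : ℝ) :
    HasDerivAt T (Real.pi/2 * (x₀ * Real.exp (-x₀^2))) x₀ := by
  set M : ℝ := |x₀| + 1 with hM
  have hM0 : 0 < M := by positivity
  have h := intervalIntegral.hasDerivAt_integral_of_dominated_loc_of_deriv_le
    (F := fun x u => gg x u) (F' := fun x u => gg' x u) (x₀ := x₀)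
    (a := 0) (b := 1) (bound := fun _ => M * (1 + 2*M^2) + M)
    (μ := volume) (Metric.ball_mem_nhds x₀ one_pos)
    (Filter.Eventually.of_forall fun x => ((gg_contu x).aestronglyMeasurable).restrict)
    ((gg_contu x₀).intervalIntegrable 0 1)
    (((gg'_contu x₀).aestronglyMeasurable).restrict)
    (Filter.Eventually.of_forall fun u hu x hx => ?_)
    (intervalIntegrable_const)
    (Filter.Eventually.of_forall fun u _ x _ => gg_hasDeriv u x)
  · rw [int_gg'] at h
    exact h.2
  · -- the bound
    rw [Set.uIoc_of_le (by norm_num : (0:ℝ) ≤ 1)] at hu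
    have hu0 : 0 < u := hu.1
    have hu1 : u ≤ 1 := hu.2
    have hxM : |x| ≤ M := by
      rw [hM]
      have := abs_sub_abs_le_abs_sub x x₀
      rw [Metric.mem_ball, Real.dist_eq] at hx
      linarith
    set w := Real.sqrt (1 - u^2) with hw
    have hw0 : 0 ≤ w := Real.sqrt_nonneg _
    have hw1 : w ≤ 1 := by
      rw [hw]
      exact Real.sqrt_le_one.mpr (by nlinarith)
    have hA : |Real.exp (-(x*u)^2)| ≤ 1 := by
      rw [abs_of_pos (Real.exp_pos _)]
      exact Real.exp_le_one_iff.2 (neg_nonpos.2 (sq_nonneg _))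
    have hC : |Real.exp (-(x*w)^2)| ≤ 1 := by
      rw [abs_of_pos (Real.exp_pos _)]
      exact Real.exp_le_one_iff.2 (neg_nonpos.2 (sq_nonneg _))
    have hB : |E (x*w)| ≤ M := by
      calc |E (x*w)| ≤ |x*w| := E_abs_le _
        _ = |x| * |w| := abs_mul _ _
        _ ≤ M * 1 := by
            apply mul_le_mul hxM _ (abs_nonneg _) hM0.le
            rw [abs_of_nonneg hw0]; exact hw1
        _ = M := mul_one M
    have hfac : |1 - 2*x^2*u^2| ≤ 1 + 2*M^2 := by
      have h1 : x^2 ≤ M^2 := by nlinarith [abs_nonneg x, sq_abs x]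
      have h2 : u^2 ≤ 1 := by nlinarith
      rw [abs_sub_comm]
      calc |2*x^2*u^2 - 1| ≤ |2*x^2*u^2| + |1| := abs_sub _ _
        _ = 2*x^2*u^2 + 1 := by
            rw [abs_of_nonneg (by positivity), abs_one]
        _ ≤ 2*M^2 + 1 := by nlinarith [sq_nonneg x, sq_nonneg u]
        _ = 1 + 2*M^2 := by ring
    show ‖gg' x u‖ ≤ M * (1 + 2*M^2) + M
    rw [Real.norm_eq_abs]
    unfold gg'
    rw [← hw]
    calc |Real.exp (-(x*u)^2) * E (x*w) * (1 - 2*x^2*u^2)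
          + x * (Real.exp (-(x*u)^2) * Real.exp (-(x*w)^2) * w)|
        ≤ |Real.exp (-(x*u)^2) * E (x*w) * (1 - 2*x^2*u^2)|
          + |x * (Real.exp (-(x*u)^2) * Real.exp (-(x*w)^2) * w)| := abs_add_le _ _
      _ ≤ M * (1 + 2*M^2) + M := by
          apply add_le_add
          · rw [abs_mul, abs_mul]
            calc |Real.exp (-(x*u)^2)| * |E (x*w)| * |1 - 2*x^2*u^2|
                ≤ 1 * M * (1 + 2*M^2) := by
                  apply mul_le_mul _ hfac (abs_nonneg _) (by positivity)
                  exact mul_le_mul hA hB (abs_nonneg _) zero_le_one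
              _ = M * (1 + 2*M^2) := by ring
          · rw [abs_mul, abs_mul, abs_mul]
            calc |x| * (|Real.exp (-(x*u)^2)| * |Real.exp (-(x*w)^2)| * |w|)
                ≤ M * (1 * 1 * 1) := by
                  apply mul_le_mul hxM _ (by positivity) hM0.le
                  have : |w| ≤ 1 := by rw [abs_of_nonneg hw0]; exact hw1
                  apply mul_le_mul _ this (abs_nonneg _) (by norm_num)
                  exact mul_le_mul hA hC (abs_nonneg _) zero_le_one
              _ = M := by ring

lemma T_zero : T 0 = 0 := by
  unfold T
  have : ∀ u : ℝ, gg 0 u = 0 := fun u => by simp [gg]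
  simp [this]

lemma T_eq {x : ℝ} (hx : 0 ≤ x) :
    T x = Real.pi/4 * (1 - Real.exp (-x^2)) := by
  rcases eq_or_lt_of_le hx with h | h
  · rw [← h, T_zero]; simp
  · set G : ℝ → ℝ := fun x => Real.pi/4 * (1 - Real.exp (-x^2)) with hG
    have hGderiv : ∀ y : ℝ, HasDerivAt G (Real.pi/2 * (y * Real.exp (-y^2))) y := by
      intro y
      have h1 : HasDerivAt (fun y : ℝ => -y^2) (-(2*y)) y := by
        have := ((hasDerivAt_pow 2 y)).neg
        refine this.congr_deriv ?_
        push_cast; ring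
      have h2 := h1.exp
      have h3 := (h2.const_sub 1).const_mul (Real.pi/4)
      refine h3.congr_deriv ?_
      ring
    have key := eq_of_has_deriv_right_eq
      (f' := fun y => Real.pi/2 * (y * Real.exp (-y^2)))
      (a := 0) (b := x) (f := T) (g := G)
      (fun y _ => (T_hasDeriv y).hasDerivWithinAt)
      (fun y _ => (hGderiv y).hasDerivWithinAt)
      (Continuous.continuousOn (continuous_iff_continuousAt.2
        fun y => (T_hasDeriv y).continuousAt))
      (Continuous.continuousOn (continuous_iff_continuousAt.2
        fun y => (hGderiv y).continuousAt))
      (by rw [T_zero, hG]; simp)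
    exact key x (by simp [h.le])

lemma Q_eq {t : ℝ} (ht : 0 < t) :
    (∫ v in (0:ℝ)..Real.sqrt t, Real.exp (-v^2) * E (Real.sqrt (t - v^2)))
      = Real.pi/4 * (1 - Real.exp (-t)) := by
  set X := Real.sqrt t with hX
  have hX0 : 0 < X := Real.sqrt_pos.2 ht
  have hX2 : X^2 = t := Real.sq_sqrt ht.le
  have hscale := intervalIntegral.smul_integral_comp_mul_right
    (a := (0:ℝ)) (b := 1)
    (f := fun v => Real.exp (-v^2) * E (Real.sqrt (t - v^2))) X
  have hcongr : (∫ u in (0:ℝ)..1,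
      Real.exp (-(u*X)^2) * E (Real.sqrt (t - (u*X)^2)))
      = ∫ u in (0:ℝ)..1, Real.exp (-(X*u)^2) * E (X * Real.sqrt (1-u^2)) := by
    apply intervalIntegral.integral_congr
    intro u hu
    rw [Set.uIcc_of_le (by norm_num : (0:ℝ) ≤ 1)] at hu
    show Real.exp (-(u*X)^2) * E (Real.sqrt (t - (u*X)^2))
      = Real.exp (-(X*u)^2) * E (X * Real.sqrt (1-u^2))
    have h1 : t - (u*X)^2 = X^2 * (1-u^2) := by rw [← hX2]; ring
    rw [h1, Real.sqrt_mul (sq_nonneg X), Real.sqrt_sq hX0.le]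
    ring_nf
  have hTX : T X = X * ∫ u in (0:ℝ)..1,
      Real.exp (-(X*u)^2) * E (X * Real.sqrt (1-u^2)) := by
    unfold T gg
    rw [intervalIntegral.integral_const_mul]
  calc (∫ v in (0:ℝ)..X, Real.exp (-v^2) * E (Real.sqrt (t - v^2)))
      = X • ∫ u in (0:ℝ)..1, Real.exp (-(u*X)^2) * E (Real.sqrt (t - (u*X)^2)) := by
        rw [hscale]
        norm_num
    _ = X * ∫ u in (0:ℝ)..1, Real.exp (-(X*u)^2) * E (X * Real.sqrt (1-u^2)) := by
        rw [hcongr, smul_eq_mul]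
    _ = T X := hTX.symm
    _ = Real.pi/4 * (1 - Real.exp (-t)) := by rw [T_eq hX0.le, hX2]

lemma gauss : ∫ s in Ioi (0:ℝ), Real.exp (-s^2) = Real.sqrt Real.pi / 2 := by
  have := integral_gaussian_Ioi 1
  simpa using this

lemma intOn (s : Set ℝ) : IntegrableOn (fun v : ℝ => Real.exp (-v^2)) s := by
  have : Integrable (fun v : ℝ => Real.exp (-(1:ℝ) * v^2)) := integrable_exp_neg_mul_sq one_pos
  simpa using this.integrableOn

lemma erfc_eq {x : ℝ} (hx : 0 ≤ x) :
    erfc x = 1 - (2 / Real.sqrt Real.pi) * E x := by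
  have hsplit : (∫ s in Ioi (0:ℝ), Real.exp (-s^2))
      = (∫ s in Ioc 0 x, Real.exp (-s^2)) + ∫ s in Ioi x, Real.exp (-s^2) := by
    rw [← setIntegral_union (Ioc_disjoint_Ioi le_rfl) measurableSet_Ioi (intOn _) (intOn _),
      Ioc_union_Ioi_eq_Ioi hx]
  have hE : E x = ∫ s in Ioc 0 x, Real.exp (-s^2) := integral_of_le hx
  have hπ : Real.sqrt Real.pi ≠ 0 := by
    positivity
  have : (∫ s in Ioi x, Real.exp (-s^2)) = Real.sqrt Real.pi / 2 - E x := by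
    rw [hE]; rw [gauss] at hsplit; linarith
  rw [erfc]
  rw [show (fun s : ℝ => Real.exp (-s ^ 2)) = fun s : ℝ => Real.exp (-s^2) from rfl, this]
  field_simp


lemma ker_intInt (t r : ℝ) (hr : (-1:ℝ) < r) (a b : ℝ) :
    IntervalIntegrable (fun s => (t - s) ^ r) volume a b := by
  have h := intervalIntegral.intervalIntegrable_rpow' (a := t - b) (b := t - a) hr
  have h2 := h.comp_sub_left t
  simpa using h2.symm

lemma key_sub {t : ℝ} (ht : 0 < t) {φ : ℝ → ℝ} (hφ : Continuous φ) :
    (∫ s in (0:ℝ)..t, (t - s) ^ (-(1/2) : ℝ) * φ s)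
      = ∫ v in (0:ℝ)..Real.sqrt t, 2 * φ (t - v^2) := by
  set f : ℝ → ℝ := fun s => (t - s) ^ (-(1/2) : ℝ) * φ s with hf
  have hint : ∀ a b : ℝ, IntervalIntegrable f volume a b := fun a b =>
    (ker_intInt t _ (by norm_num) a b).mul_continuousOn hφ.continuousOn
  set g : ℝ → ℝ := fun v => 2 * φ (t - v^2) with hgdef
  have hg : Continuous g := by fun_prop
  set G : ℝ → ℝ := fun u => ∫ v in u..Real.sqrt t, g v with hGdef
  have hG : ∀ u, HasDerivAt G (-g u) u := fun u =>
    integral_hasDerivAt_left (hg.intervalIntegrable _ _)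
      (hg.stronglyMeasurableAtFilter _ _) hg.continuousAt
  have hGcont : Continuous G := continuous_iff_continuousAt.2 fun u => (hG u).continuousAt
  set Φ : ℝ → ℝ := fun a => ∫ s in (0:ℝ)..a, f s with hΦdef
  set Ψ : ℝ → ℝ := fun a => G (Real.sqrt (t - a)) with hΨdef
  have hfc : ContinuousOn f (Iio t) := by
    apply ContinuousOn.mul ?_ hφ.continuousOn
    apply ContinuousOn.rpow_const ((continuous_const.sub continuous_id).continuousOn)
    intro s hs
    exact Or.inl (sub_ne_zero.2 (ne_of_gt hs))
  have derivΦ : ∀ a ∈ Ico 0 t, HasDerivWithinAt Φ (f a) (Ici a) a := by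
    intro a ha
    exact (integral_hasDerivAt_right (hint 0 a)
      (hfc.stronglyMeasurableAtFilter isOpen_Iio a ha.2)
      (hfc.continuousAt (Iio_mem_nhds ha.2))).hasDerivWithinAt
  have derivΨ : ∀ a ∈ Ico 0 t, HasDerivWithinAt Ψ (f a) (Ici a) a := by
    intro a ha
    have hta : (0:ℝ) < t - a := sub_pos.2 ha.2
    have hc : HasDerivAt (fun a => Real.sqrt (t - a)) (1 / (2 * Real.sqrt (t - a)) * (-1)) a :=
      (Real.hasDerivAt_sqrt (ne_of_gt hta)).comp a ((hasDerivAt_id a).const_sub t)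
    have h1 : HasDerivAt Ψ (-g (Real.sqrt (t - a)) * (1 / (2 * Real.sqrt (t - a)) * (-1))) a :=
      by have := (hG (Real.sqrt (t - a))).comp a hc; exact this
    have h2 : -g (Real.sqrt (t - a)) * (1 / (2 * Real.sqrt (t - a)) * (-1)) = f a := by
      have hsq : Real.sqrt (t - a) ^ 2 = t - a := Real.sq_sqrt hta.le
      have hs0 : (0:ℝ) < Real.sqrt (t - a) := Real.sqrt_pos.2 hta
      have hrpow : (t - a) ^ (-(1/2) : ℝ) = (Real.sqrt (t - a))⁻¹ := by
        rw [Real.rpow_neg hta.le, Real.sqrt_eq_rpow]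
      simp only [hgdef, hf, hsq, hrpow]
      field_simp
      ring
    exact (h2 ▸ h1).hasDerivWithinAt
  have fcont : ContinuousOn Φ (Icc 0 t) := by
    have := continuousOn_primitive_interval
      (f := f) (μ := volume) (a := 0) (b := t) ?_
    · simpa [uIcc_of_le ht.le] using this
    · rw [uIcc_of_le ht.le]
      exact ((intervalIntegrable_iff_integrableOn_Icc_of_le ht.le).1 (hint 0 t))
  have gcont : ContinuousOn Ψ (Icc 0 t) :=
    (hGcont.comp (by fun_prop : Continuous fun a : ℝ => Real.sqrt (t - a))).continuousOn
  have hΦ0 : Φ 0 = Ψ 0 := by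
    simp [hΦdef, hΨdef, hGdef, integral_same]
  have := eq_of_has_deriv_right_eq derivΦ derivΨ fcont gcont hΦ0 t (by simp [ht.le])
  calc (∫ s in (0:ℝ)..t, (t - s) ^ (-(1/2) : ℝ) * φ s) = Φ t := rfl
    _ = Ψ t := this
    _ = ∫ v in (0:ℝ)..Real.sqrt t, g v := by simp [hΨdef, hGdef]

end Ex53

open Ex53

/-- The function `y(t) = 1 − e^t erfc(√t)` is the exact solution of the fractional
integral equation of Example 5.3. -/
theorem example53_exact_solution
    (y : ℝ → ℝ) (hy : ∀ t : ℝ, y t = 1 - Real.exp t * erfc (Real.sqrt t)) :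
    ∀ t ∈ Set.Icc (0:ℝ) 1,
      y t = -(1 / Real.Gamma 0.5) * (∫ s in (0:ℝ)..t, (t - s) ^ (-(1/2) : ℝ) * y s)
            + 2 * Real.sqrt (t / Real.pi) := by
  intro t htmem
  have hsπ : (0:ℝ) < Real.sqrt Real.pi := Real.sqrt_pos.2 Real.pi_pos
  have hππ : Real.sqrt Real.pi * Real.sqrt Real.pi = Real.pi :=
    Real.mul_self_sqrt Real.pi_pos.le
  have hΓ : Real.Gamma 0.5 = Real.sqrt Real.pi := by
    rw [show (0.5:ℝ) = 1/2 by norm_num, Real.Gamma_one_half_eq]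
  have hyψ : ∀ s : ℝ, y s = 1 - Real.exp s
      + (2/Real.sqrt Real.pi) * (Real.exp s * E (Real.sqrt s)) := by
    intro s
    rw [hy, erfc_eq (Real.sqrt_nonneg s)]
    ring
  rcases eq_or_lt_of_le htmem.1 with h0 | h0
  · -- t = 0
    rw [← h0]
    rw [hyψ 0]
    simp [E_zero]
  · -- 0 < t
    set ψ : ℝ → ℝ := fun s => 1 - Real.exp s
      + (2/Real.sqrt Real.pi) * (Real.exp s * E (Real.sqrt s)) with hψdef
    have hψcont : Continuous ψ := by
      have h2 : Continuous fun s : ℝ => E (Real.sqrt s) :=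
        E_cont.comp Real.continuous_sqrt
      fun_prop
    have hcongr : (∫ s in (0:ℝ)..t, (t - s) ^ (-(1/2) : ℝ) * y s)
        = ∫ s in (0:ℝ)..t, (t - s) ^ (-(1/2) : ℝ) * ψ s := by
      apply intervalIntegral.integral_congr
      intro s _
      simp only [hψdef]
      rw [hyψ s]
    rw [hcongr, key_sub h0 hψcont]
    set X := Real.sqrt t with hX
    have hfun : (fun v : ℝ => 2 * ψ (t - v^2))
        = fun v : ℝ => ((2:ℝ) - (2*Real.exp t) * Real.exp (-v^2))
          + ((2/Real.sqrt Real.pi)*(2*Real.exp t))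
            * (Real.exp (-v^2) * E (Real.sqrt (t - v^2))) := by
      funext v
      simp only [hψdef]
      rw [show t - v^2 = t + -v^2 by ring, Real.exp_add]
      ring
    rw [hfun]
    have hint1 : IntervalIntegrable
        (fun v : ℝ => (2:ℝ) - (2*Real.exp t) * Real.exp (-v^2)) volume 0 X := by
      apply Continuous.intervalIntegrable; fun_prop
    have hint2 : IntervalIntegrable
        (fun v : ℝ => ((2/Real.sqrt Real.pi)*(2*Real.exp t))
          * (Real.exp (-v^2) * E (Real.sqrt (t - v^2)))) volume 0 X := by
      apply Continuous.intervalIntegrable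
      have h2 : Continuous fun v : ℝ => E (Real.sqrt (t - v^2)) := by
        apply E_cont.comp; fun_prop
      fun_prop
    rw [intervalIntegral.integral_add hint1 hint2]
    have hint3 : IntervalIntegrable (fun v : ℝ => (2*Real.exp t) * Real.exp (-v^2))
        volume 0 X := by
      apply Continuous.intervalIntegrable; fun_prop
    rw [intervalIntegral.integral_sub (intervalIntegrable_const) hint3,
      intervalIntegral.integral_const_mul, intervalIntegral.integral_const_mul,
      intervalIntegral.integral_const, Q_eq h0]
    have hEX : (∫ v in (0:ℝ)..X, Real.exp (-v^2)) = E X := rfl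
    rw [hEX, hyψ t, hΓ]
    have hsqrtdiv : Real.sqrt (t/Real.pi) = X / Real.sqrt Real.pi := by
      rw [hX, Real.sqrt_div htmem.1]
    rw [hsqrtdiv, Real.exp_neg]
    set S := Real.sqrt Real.pi with hS
    have hπ2 : Real.pi = S*S := hππ.symm
    rw [hπ2]
    have hS0 : S ≠ 0 := ne_of_gt hsπ
    have het : Real.exp t ≠ 0 := Real.exp_ne_zero t
    field_simp
    ring
end
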